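/- Let p : {0,1}^n → ℝ be a probability distribution with Σ_{x} p(x)² ≤ α·2^(−n) for some α > 0. Let ε ∈ (0,1), ℓ ∈ ℕ, γ > 0, and suppose p' : {0,1}^n → ℝ satisfies |p'(s) − p̂(s)| ≤ γ·2^(−n) for all s with Hamming weight |s| ≤ ℓ. Define q̃ : {0,1}^n → ℝ by q̃(x) = Σ_{s : |s| ≤ ℓ} (1−ε)^(|s|)·p'(s)·(−1)^(s·x), and let p̃ = N_ε p be the noisy version of p. Then Σ_{x∈{0,1}^n} |q̃(x) − p̃(x)| ≤ sqrt(γ²·(n^ℓ + 1) + α·(1−ε)^(2ℓ)). -/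

import Mathlib

open Finset

noncomputable section

/-- `s · x`: the number of coordinates where both `s` and `x` equal `1`. -/
def bdot {n : ℕ} (s x : Fin n → ZMod 2) : ℕ :=
  (Finset.univ.filter (fun i => s i = 1 ∧ x i = 1)).card

/-- Hamming weight of a bit string. -/
def hwt {n : ℕ} (s : Fin n → ZMod 2) : ℕ :=
  (Finset.univ.filter (fun i => s i ≠ 0)).card

/-- The Fourier coefficient `f̂(s) = 2^(−n) · Σ_x f(x)·(−1)^(s·x)`. -/
def fcoef {n : ℕ} (f : (Fin n → ZMod 2) → ℝ) (s : Fin n → ZMod 2) : ℝ :=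
  (2 : ℝ) ^ (-(n : ℤ)) * ∑ x : Fin n → ZMod 2, f x * (-1) ^ (bdot s x)

/-- The noise operator: `(N_ε p)(x) = Σ_y p(y)·(ε/2)^|x⊕y|·(1−ε/2)^(n−|x⊕y|)`. -/
def noiseOp {n : ℕ} (ε : ℝ) (p : (Fin n → ZMod 2) → ℝ) (x : Fin n → ZMod 2) : ℝ :=
  ∑ y : Fin n → ZMod 2,
    p y * (ε / 2) ^ (hwt (x + y)) * (1 - ε / 2) ^ (n - hwt (x + y))

namespace TRE

variable {n : ℕ}

lemma zmod2_cases (a : ZMod 2) : a = 0 ∨ a = 1 := by revert a; decide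

lemma sum_zmod2 (f : ZMod 2 → ℝ) : ∑ b : ZMod 2, f b = f 0 + f 1 := by
  have hu : (univ : Finset (ZMod 2)) = {0, 1} := by decide
  rw [hu, Finset.sum_pair (by decide)]

lemma chi_prod (s x : Fin n → ZMod 2) :
    ((-1 : ℝ)) ^ (bdot s x) = ∏ i, (if s i = 1 ∧ x i = 1 then (-1 : ℝ) else 1) := by
  rw [bdot, Finset.card_filter, ← Finset.prod_pow_eq_pow_sum]
  refine Finset.prod_congr rfl fun i _ => ?_
  split <;> simp

lemma wt_prod (a : ℝ) (s : Fin n → ZMod 2) :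
    a ^ (hwt s) = ∏ i, (if s i ≠ 0 then a else 1) := by
  rw [hwt, Finset.card_filter, ← Finset.prod_pow_eq_pow_sum]
  exact Finset.prod_congr rfl fun i _ => by split <;> simp

lemma sum_chi (u : Fin n → ZMod 2) :
    ∑ x : Fin n → ZMod 2, ((-1 : ℝ)) ^ (bdot u x) = if u = 0 then (2:ℝ) ^ n else 0 := by
  simp_rw [chi_prod]
  rw [← Fintype.piFinset_univ, ← Finset.prod_univ_sum (fun _ : Fin n => (univ : Finset (ZMod 2))) (fun i b => if u i = 1 ∧ b = 1 then (-1:ℝ) else 1)]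
  have h : ∀ i, (∑ b : ZMod 2, (if u i = 1 ∧ b = 1 then (-1:ℝ) else 1))
      = if u i = 1 then 0 else 2 := by
    intro i; rw [sum_zmod2]; by_cases h : u i = 1 <;> simp [h] <;> norm_num
  simp_rw [h]
  by_cases hu : u = 0
  · subst hu; simp
  · rw [if_neg hu]
    obtain ⟨i, hi⟩ := Function.ne_iff.mp hu
    have h1 : u i = 1 := by
      rcases zmod2_cases (u i) with h'|h'
      · exact absurd h' hi
      · exact h'
    exact Finset.prod_eq_zero (mem_univ i) (by simp [h1])

lemma bdot_comm (s x : Fin n → ZMod 2) : bdot s x = bdot x s := by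
  unfold bdot; congr 1; ext i; simp [and_comm]

lemma chi_add_right (s x y : Fin n → ZMod 2) :
    ((-1:ℝ)) ^ (bdot s x) * (-1) ^ (bdot s y) = (-1) ^ (bdot s (x + y)) := by
  simp_rw [chi_prod, ← Finset.prod_mul_distrib]
  refine Finset.prod_congr rfl fun i _ => ?_
  have hxy : (x + y) i = x i + y i := rfl
  rcases zmod2_cases (s i) with hs|hs <;> rcases zmod2_cases (x i) with hx|hx <;>
    rcases zmod2_cases (y i) with hy|hy <;>
    simp [hs, hx, hy, hxy] <;> decide

lemma chi_add_left (s t x : Fin n → ZMod 2) :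
    ((-1:ℝ)) ^ (bdot s x) * (-1) ^ (bdot t x) = (-1) ^ (bdot (s + t) x) := by
  rw [bdot_comm s x, bdot_comm t x, bdot_comm (s+t) x]
  exact chi_add_right x s t

lemma add_eq_zero_iff'' (s t : Fin n → ZMod 2) : s + t = 0 ↔ t = s := by
  constructor
  · intro h; funext i
    have h1 : s i + t i = 0 := congrFun h i
    revert h1
    rcases zmod2_cases (s i) with h|h <;> rcases zmod2_cases (t i) with h'|h' <;>
      simp [h, h'] <;> decide
  · intro h; rw [h]; funext i
    show s i + s i = 0
    rcases zmod2_cases (s i) with h|h <;> rw [h] <;> decide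

lemma hwt_le (z : Fin n → ZMod 2) : hwt z ≤ n := by
  unfold hwt
  simpa using Finset.card_filter_le univ (fun i => z i ≠ 0)

lemma kernel_expand (ε : ℝ) (z : Fin n → ZMod 2) :
    (ε/2) ^ (hwt z) * (1 - ε/2) ^ (n - hwt z)
      = (2:ℝ) ^ (-(n:ℤ)) * ∑ s : Fin n → ZMod 2, (1-ε) ^ (hwt s) * (-1:ℝ) ^ (bdot s z) := by
  have hsum : ∑ s : Fin n → ZMod 2, (1-ε) ^ (hwt s) * (-1:ℝ) ^ (bdot s z)
      = ε ^ (hwt z) * (2-ε) ^ (n - hwt z) := by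
    have e1 : ∀ s : Fin n → ZMod 2, (1-ε) ^ (hwt s) * (-1:ℝ) ^ (bdot s z)
        = ∏ i, ((if s i ≠ 0 then (1-ε) else 1) * (if s i = 1 ∧ z i = 1 then (-1:ℝ) else 1)) := by
      intro s; rw [wt_prod, chi_prod, Finset.prod_mul_distrib]
    simp_rw [e1]
    rw [← Fintype.piFinset_univ, ← Finset.prod_univ_sum (fun _ : Fin n => (univ : Finset (ZMod 2)))
      (fun i b => (if b ≠ 0 then (1-ε) else 1) * (if b = 1 ∧ z i = 1 then (-1:ℝ) else 1))]
    have h : ∀ i, (∑ b : ZMod 2, (if b ≠ 0 then (1-ε) else 1) * (if b = 1 ∧ z i = 1 then (-1:ℝ) else 1))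
        = if z i ≠ 0 then ε else 2 - ε := by
      intro i; rw [sum_zmod2]
      rcases zmod2_cases (z i) with h|h <;> simp [h] <;> ring
    simp_rw [h]
    have hcard1 : (univ.filter (fun i => z i ≠ 0)).card = hwt z := rfl
    have hcard2 : (univ.filter (fun i => ¬ z i ≠ 0)).card = n - hwt z := by
      have := Finset.card_filter_add_card_filter_not (s := (univ : Finset (Fin n)))
        (p := fun i => z i ≠ 0)
      simp only [card_univ, Fintype.card_fin] at this
      unfold hwt
      omega
    rw [Finset.prod_ite, Finset.prod_const, Finset.prod_const, hcard1, hcard2]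
  rw [hsum]
  have ha := hwt_le z
  have h2 : (2:ℝ)^(hwt z) * 2^(n - hwt z) = 2^n := by
    rw [← pow_add]; congr 1; omega
  have h2n : ((2:ℝ))^(-(n:ℤ)) = ((2:ℝ)^n)⁻¹ := by
    rw [zpow_neg, zpow_natCast]
  rw [h2n, ← h2]
  rw [show (1 - ε/2) = (2-ε)/2 by ring]
  rw [div_pow, div_pow]
  field_simp

lemma noiseOp_eq (ε : ℝ) (p : (Fin n → ZMod 2) → ℝ) (x : Fin n → ZMod 2) :
    noiseOp ε p x = ∑ s : Fin n → ZMod 2, (1-ε) ^ (hwt s) * fcoef p s * (-1:ℝ) ^ (bdot s x) := by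
  unfold noiseOp
  simp_rw [mul_assoc, kernel_expand ε, Finset.mul_sum, ← chi_add_right]
  rw [Finset.sum_comm]
  refine Finset.sum_congr rfl fun s _ => ?_
  rw [fcoef, Finset.mul_sum, Finset.sum_mul, Finset.mul_sum]
  refine Finset.sum_congr rfl fun y _ => ?_
  ring

lemma parseval_coeffs (c : (Fin n → ZMod 2) → ℝ) :
    ∑ x : Fin n → ZMod 2, (∑ s : Fin n → ZMod 2, c s * (-1:ℝ) ^ (bdot s x)) ^ 2
      = 2 ^ n * ∑ s : Fin n → ZMod 2, (c s) ^ 2 := by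
  have key : ∀ s t : Fin n → ZMod 2,
      ∑ x : Fin n → ZMod 2, (c s * (-1:ℝ)^(bdot s x)) * (c t * (-1)^(bdot t x))
      = if t = s then c s * c t * 2^n else 0 := by
    intro s t
    have e : ∀ x : Fin n → ZMod 2, (c s * (-1:ℝ)^(bdot s x)) * (c t * (-1)^(bdot t x))
        = c s * c t * (-1)^(bdot (s+t) x) := by
      intro x; rw [← chi_add_left]; ring
    simp_rw [e]
    rw [← Finset.mul_sum, sum_chi]
    rcases eq_or_ne t s with h|h
    · subst h
      rw [if_pos ((add_eq_zero_iff'' t t).mpr rfl), if_pos rfl]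
    · rw [if_neg (fun hc => h ((add_eq_zero_iff'' s t).mp hc)), if_neg h, mul_zero]
  simp_rw [sq, Finset.sum_mul_sum]
  rw [Finset.sum_comm]
  have e2 : ∀ s : Fin n → ZMod 2,
      ∑ x : Fin n → ZMod 2, ∑ t : Fin n → ZMod 2,
        (c s * (-1:ℝ)^(bdot s x)) * (c t * (-1)^(bdot t x))
      = c s * c s * 2^n := by
    intro s
    rw [Finset.sum_comm]
    simp_rw [key]
    rw [Finset.sum_ite_eq' univ s (fun t => c s * c t * 2^n)]
    simp
  simp_rw [e2]
  rw [← Finset.sum_mul]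
  ring

lemma inversion (p : (Fin n → ZMod 2) → ℝ) (x : Fin n → ZMod 2) :
    ∑ s : Fin n → ZMod 2, fcoef p s * (-1:ℝ) ^ (bdot s x) = p x := by
  have e0 : ∀ s : Fin n → ZMod 2, fcoef p s * (-1:ℝ)^(bdot s x)
      = (2:ℝ)^(-(n:ℤ)) * ∑ y : Fin n → ZMod 2, p y * ((-1:ℝ)^(bdot s y) * (-1)^(bdot s x)) := by
    intro s
    rw [fcoef, mul_assoc, Finset.sum_mul]
    congr 1
    exact Finset.sum_congr rfl fun y _ => by ring
  simp_rw [e0]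
  rw [← Finset.mul_sum, Finset.sum_comm]
  have e : ∀ y : Fin n → ZMod 2,
      ∑ s : Fin n → ZMod 2, p y * ((-1:ℝ)^(bdot s y) * (-1)^(bdot s x))
      = p y * (if y + x = 0 then (2:ℝ)^n else 0) := by
    intro y
    simp_rw [chi_add_right]
    have hb : ∀ s : Fin n → ZMod 2, bdot s (y+x) = bdot (y+x) s := fun s => bdot_comm s (y+x)
    simp_rw [hb]
    rw [← Finset.mul_sum, sum_chi (y + x)]
  have e2 : ∀ y : Fin n → ZMod 2, p y * (if y + x = 0 then (2:ℝ)^n else 0)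
      = if x = y then p y * (2:ℝ)^n else 0 := by
    intro y
    rcases eq_or_ne x y with h|h
    · subst h
      rw [if_pos ((add_eq_zero_iff'' x x).mpr rfl), if_pos rfl]
    · rw [if_neg (fun hc => h ((add_eq_zero_iff'' y x).mp hc)), if_neg h, mul_zero]
  simp_rw [e, e2]
  rw [Finset.sum_ite_eq univ x (fun y => p y * (2:ℝ)^n)]
  simp only [mem_univ, if_true]
  have h2 : ((2:ℝ))^(-(n:ℤ)) = ((2:ℝ)^n)⁻¹ := by rw [zpow_neg, zpow_natCast]
  rw [h2]
  field_simp

lemma parseval_p (p : (Fin n → ZMod 2) → ℝ) :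
    ∑ s : Fin n → ZMod 2, (fcoef p s) ^ 2
      = ((2:ℝ)^n)⁻¹ * ∑ x : Fin n → ZMod 2, (p x) ^ 2 := by
  have h := parseval_coeffs (fcoef p)
  simp_rw [inversion p] at h
  rw [h]
  field_simp

lemma supp_eq_imp (s t : Fin n → ZMod 2)
    (h : univ.filter (fun i => s i ≠ 0) = univ.filter (fun i => t i ≠ 0)) : s = t := by
  funext i
  have h1 := Finset.ext_iff.mp h i
  simp only [Finset.mem_filter, Finset.mem_univ, true_and] at h1
  rcases zmod2_cases (s i) with hs|hs <;> rcases zmod2_cases (t i) with ht|ht <;>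
    rw [hs, ht] <;> simp [hs, ht] at h1 ⊢

lemma count_low (ℓ : ℕ) :
    ((univ : Finset (Fin n → ZMod 2)).filter (fun s => hwt s ≤ ℓ)).card ≤ n ^ ℓ + 1 := by
  rcases Nat.eq_zero_or_pos n with hn|hn
  · subst hn
    have h1 : ((univ : Finset (Fin 0 → ZMod 2)).filter (fun s => hwt s ≤ ℓ)).card
        ≤ (univ : Finset (Fin 0 → ZMod 2)).card := Finset.card_filter_le _ _
    have h2 : (univ : Finset (Fin 0 → ZMod 2)).card = 1 := by
      rw [card_univ]; simp
    exact le_trans (le_trans h1 (le_of_eq h2)) (Nat.le_add_left 1 _)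
  · classical
    have hsub : (univ : Finset (Fin n → ZMod 2)).filter (fun s => hwt s ≤ ℓ)
        ⊆ insert 0 ((univ : Finset (Fin n → ZMod 2)).filter (fun s => hwt s ≤ ℓ ∧ s ≠ 0)) := by
      intro s hs
      simp only [mem_filter, mem_univ, true_and] at hs
      by_cases h0 : s = 0
      · simp [h0]
      · simp [mem_insert, mem_filter, hs, h0]
    have hA : ((univ : Finset (Fin n → ZMod 2)).filter (fun s => hwt s ≤ ℓ ∧ s ≠ 0)).card
        ≤ n ^ ℓ := by
      set F : (Fin n → ZMod 2) → (Fin ℓ → Fin n) := fun s i =>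
        if h : (i : ℕ) < hwt s then (univ.filter (fun j => s j ≠ 0)).orderEmbOfFin rfl ⟨i, h⟩
        else if h0 : 0 < hwt s then (univ.filter (fun j => s j ≠ 0)).orderEmbOfFin rfl ⟨0, h0⟩
        else ⟨0, hn⟩ with hF
      have himg : ∀ s : Fin n → ZMod 2, hwt s ≤ ℓ → s ≠ 0 →
          Finset.image (F s) univ = univ.filter (fun j => s j ≠ 0) := by
        intro s hℓ hs0
        obtain ⟨j0, hj0⟩ := Function.ne_iff.mp hs0
        have hpos : 0 < hwt s := Finset.card_pos.mpr
          ⟨j0, by simp only [mem_filter, mem_univ, true_and]; simpa using hj0⟩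
        apply Finset.Subset.antisymm
        · intro a ha
          obtain ⟨i, _, rfl⟩ := Finset.mem_image.mp ha
          simp only [hF]
          by_cases h : (i : ℕ) < hwt s
          · rw [dif_pos h]
            exact Finset.orderEmbOfFin_mem _ rfl _
          · rw [dif_neg h, dif_pos hpos]
            exact Finset.orderEmbOfFin_mem _ rfl _
        · intro a ha
          have hmem : a ∈ Set.range ((univ.filter (fun j => s j ≠ 0)).orderEmbOfFin
              (rfl : (univ.filter (fun j => s j ≠ 0)).card = hwt s)) := by
            rw [Finset.range_orderEmbOfFin]
            exact_mod_cast ha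
          obtain ⟨j, hj⟩ := hmem
          refine Finset.mem_image.mpr ⟨⟨(j : ℕ), lt_of_lt_of_le j.2 hℓ⟩, mem_univ _, ?_⟩
          simp only [hF]
          rw [dif_pos (show ((j : ℕ) : ℕ) < hwt s from j.2)]
          exact hj
      have hinj : Set.InjOn F
          ((univ : Finset (Fin n → ZMod 2)).filter (fun s => hwt s ≤ ℓ ∧ s ≠ 0)) := by
        intro s hs t ht hFeq
        simp only [coe_filter, Set.mem_setOf_eq, mem_univ, true_and] at hs ht
        exact supp_eq_imp s t (by rw [← himg s hs.1 hs.2, ← himg t ht.1 ht.2, hFeq])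
      have hcard := Finset.card_le_card_of_injOn F (fun a _ => mem_univ (F a)) hinj
      rwa [card_univ, Fintype.card_fun, Fintype.card_fin, Fintype.card_fin] at hcard
    have := Finset.card_le_card hsub
    have := Finset.card_insert_le (0 : Fin n → ZMod 2)
      ((univ : Finset (Fin n → ZMod 2)).filter (fun s => hwt s ≤ ℓ ∧ s ≠ 0))
    omega

end TRE

open TRE

/-- if `p` is a probability distribution with `Σ_x p(x)² ≤ α·2^(−n)` and
`p'` approximates the low-order Fourier coefficients of `p` up to `γ·2^(−n)`, then the
truncated noisy reconstruction `q̃` satisfies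
`Σ_x |q̃(x) − (N_ε p)(x)| ≤ sqrt(γ²·(n^ℓ + 1) + α·(1−ε)^(2ℓ))`. -/
theorem truncated_reconstruction_error (n : ℕ) (p : (Fin n → ZMod 2) → ℝ)
    (hpos : ∀ x, 0 ≤ p x) (hsum : ∑ x : Fin n → ZMod 2, p x = 1)
    (α : ℝ) (hα : 0 < α) (hp2 : ∑ x : Fin n → ZMod 2, (p x) ^ 2 ≤ α * (2 : ℝ) ^ (-(n : ℤ)))
    (ε : ℝ) (hε0 : 0 < ε) (hε1 : ε < 1) (ℓ : ℕ) (γ : ℝ) (hγ : 0 < γ)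
    (p' : (Fin n → ZMod 2) → ℝ)
    (happrox : ∀ s : Fin n → ZMod 2, hwt s ≤ ℓ → |p' s - fcoef p s| ≤ γ * (2 : ℝ) ^ (-(n : ℤ))) :
    ∑ x : Fin n → ZMod 2,
        |(∑ s ∈ Finset.univ.filter (fun s : Fin n → ZMod 2 => hwt s ≤ ℓ),
            (1 - ε) ^ (hwt s) * p' s * (-1 : ℝ) ^ (bdot s x))
          - noiseOp ε p x|
      ≤ Real.sqrt (γ ^ 2 * ((n : ℝ) ^ ℓ + 1) + α * (1 - ε) ^ (2 * ℓ)) := by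
  classical
  have h2n : ((2:ℝ))^(-(n:ℤ)) = ((2:ℝ)^n)⁻¹ := by rw [zpow_neg, zpow_natCast]
  have hN : (0:ℝ) < 2^n := by positivity
  set c : (Fin n → ZMod 2) → ℝ := fun s =>
    if hwt s ≤ ℓ then (1-ε)^(hwt s) * (p' s - fcoef p s)
    else -((1-ε)^(hwt s) * fcoef p s) with hcdef
  have hdiff : ∀ x : Fin n → ZMod 2,
      (∑ s ∈ Finset.univ.filter (fun s : Fin n → ZMod 2 => hwt s ≤ ℓ),
          (1-ε)^(hwt s) * p' s * (-1:ℝ)^(bdot s x)) - noiseOp ε p x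
      = ∑ s : Fin n → ZMod 2, c s * (-1)^(bdot s x) := by
    intro x
    rw [noiseOp_eq]
    rw [← Finset.sum_filter_add_sum_filter_not univ (fun s : Fin n → ZMod 2 => hwt s ≤ ℓ)
        (fun s => c s * (-1:ℝ)^(bdot s x))]
    rw [← Finset.sum_filter_add_sum_filter_not univ (fun s : Fin n → ZMod 2 => hwt s ≤ ℓ)
        (fun s => (1-ε)^(hwt s) * fcoef p s * (-1:ℝ)^(bdot s x))]
    have hA : ∑ s ∈ univ.filter (fun s : Fin n → ZMod 2 => hwt s ≤ ℓ), c s * (-1:ℝ)^(bdot s x)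
        = ∑ s ∈ univ.filter (fun s : Fin n → ZMod 2 => hwt s ≤ ℓ),
            ((1-ε)^(hwt s) * p' s * (-1:ℝ)^(bdot s x)
              - (1-ε)^(hwt s) * fcoef p s * (-1:ℝ)^(bdot s x)) := by
      refine Finset.sum_congr rfl fun s hs => ?_
      simp only [mem_filter, mem_univ, true_and] at hs
      rw [hcdef]
      simp only []
      rw [if_pos hs]
      ring
    have hB : ∑ s ∈ univ.filter (fun s : Fin n → ZMod 2 => ¬ hwt s ≤ ℓ), c s * (-1:ℝ)^(bdot s x)
        = ∑ s ∈ univ.filter (fun s : Fin n → ZMod 2 => ¬ hwt s ≤ ℓ),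
            -((1-ε)^(hwt s) * fcoef p s * (-1:ℝ)^(bdot s x)) := by
      refine Finset.sum_congr rfl fun s hs => ?_
      simp only [mem_filter, mem_univ, true_and] at hs
      rw [hcdef]
      simp only []
      rw [if_neg hs]
      ring
    rw [hA, hB, Finset.sum_sub_distrib, Finset.sum_neg_distrib]
    ring
  simp_rw [hdiff]
  -- key quantities
  have hcard : ((univ : Finset (Fin n → ZMod 2)).card : ℝ) = 2^n := by
    rw [card_univ, Fintype.card_fun, Fintype.card_fin]
    push_cast [ZMod.card]
    rfl
  -- Cauchy–Schwarz
  have hCS : (∑ x : Fin n → ZMod 2, |∑ s : Fin n → ZMod 2, c s * (-1:ℝ)^(bdot s x)|) ^ 2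
      ≤ (2:ℝ)^n * ∑ x : Fin n → ZMod 2,
          (∑ s : Fin n → ZMod 2, c s * (-1:ℝ)^(bdot s x))^2 := by
    have h := Finset.sum_mul_sq_le_sq_mul_sq univ (fun _ => (1:ℝ))
      (fun x => |∑ s : Fin n → ZMod 2, c s * (-1:ℝ)^(bdot s x)|)
    simp only [one_mul, one_pow, sq_abs] at h
    rwa [Finset.sum_const, nsmul_eq_mul, mul_one, hcard] at h
  -- bound on coefficients, low part
  have hb1 : ∑ s ∈ univ.filter (fun s : Fin n → ZMod 2 => hwt s ≤ ℓ), (c s)^2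
      ≤ ((n:ℝ)^ℓ + 1) * (γ * ((2:ℝ)^n)⁻¹)^2 := by
    have hterm : ∀ s ∈ univ.filter (fun s : Fin n → ZMod 2 => hwt s ≤ ℓ),
        (c s)^2 ≤ (γ * ((2:ℝ)^n)⁻¹)^2 := by
      intro s hs
      simp only [mem_filter, mem_univ, true_and] at hs
      rw [hcdef]
      simp only []
      rw [if_pos hs]
      have h1 : |(1-ε)^(hwt s) * (p' s - fcoef p s)| ≤ γ * ((2:ℝ)^n)⁻¹ := by
        rw [abs_mul]
        have e1 : |(1-ε)^(hwt s)| ≤ 1 := by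
          rw [abs_pow]
          apply pow_le_one₀ (abs_nonneg _)
          rw [abs_le]; constructor <;> linarith
        have e2 := happrox s hs
        rw [h2n] at e2
        calc |(1-ε)^(hwt s)| * |p' s - fcoef p s| ≤ 1 * (γ * ((2:ℝ)^n)⁻¹) :=
              mul_le_mul e1 e2 (abs_nonneg _) one_pos.le
          _ = γ * ((2:ℝ)^n)⁻¹ := one_mul _
      calc ((1-ε)^(hwt s) * (p' s - fcoef p s))^2
          = |(1-ε)^(hwt s) * (p' s - fcoef p s)|^2 := (sq_abs _).symm
        _ ≤ (γ * ((2:ℝ)^n)⁻¹)^2 := pow_le_pow_left₀ (abs_nonneg _) h1 2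
    have h := Finset.sum_le_card_nsmul _ _ _ hterm
    rw [nsmul_eq_mul] at h
    refine le_trans h (mul_le_mul_of_nonneg_right ?_ (sq_nonneg _))
    have hc := count_low (n := n) ℓ
    calc ((univ.filter (fun s : Fin n → ZMod 2 => hwt s ≤ ℓ)).card : ℝ)
        ≤ ((n ^ ℓ + 1 : ℕ) : ℝ) := by exact_mod_cast hc
      _ = (n:ℝ)^ℓ + 1 := by push_cast; ring
  -- bound on coefficients, high part
  have hb2 : ∑ s ∈ univ.filter (fun s : Fin n → ZMod 2 => ¬ hwt s ≤ ℓ), (c s)^2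
      ≤ (1-ε)^(2*ℓ) * (α * (((2:ℝ)^n)⁻¹ * ((2:ℝ)^n)⁻¹)) := by
    have step1 : ∑ s ∈ univ.filter (fun s : Fin n → ZMod 2 => ¬ hwt s ≤ ℓ), (c s)^2
        ≤ ∑ s ∈ univ.filter (fun s : Fin n → ZMod 2 => ¬ hwt s ≤ ℓ),
            (1-ε)^(2*ℓ) * (fcoef p s)^2 := by
      refine Finset.sum_le_sum fun s hs => ?_
      simp only [mem_filter, mem_univ, true_and] at hs
      rw [hcdef]
      simp only []
      rw [if_neg hs]
      have e : (-((1-ε)^(hwt s) * fcoef p s))^2 = (1-ε)^(hwt s * 2) * (fcoef p s)^2 := by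
        rw [pow_mul]; ring
      rw [e]
      apply mul_le_mul_of_nonneg_right _ (sq_nonneg _)
      exact pow_le_pow_of_le_one (by linarith) (by linarith) (by omega)
    refine le_trans step1 ?_
    rw [← Finset.mul_sum]
    refine mul_le_mul_of_nonneg_left ?_ (pow_nonneg (by linarith : (0:ℝ) ≤ 1-ε) _)
    refine le_trans (Finset.sum_le_sum_of_subset_of_nonneg (Finset.filter_subset _ _)
      (fun s _ _ => sq_nonneg _)) ?_
    rw [parseval_p]
    rw [h2n] at hp2
    calc ((2:ℝ)^n)⁻¹ * ∑ x : Fin n → ZMod 2, (p x)^2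
        ≤ ((2:ℝ)^n)⁻¹ * (α * ((2:ℝ)^n)⁻¹) :=
          mul_le_mul_of_nonneg_left hp2 (inv_nonneg.mpr hN.le)
      _ = α * (((2:ℝ)^n)⁻¹ * ((2:ℝ)^n)⁻¹) := by ring
  -- assemble
  have hgoal : (∑ x : Fin n → ZMod 2, |∑ s : Fin n → ZMod 2, c s * (-1:ℝ)^(bdot s x)|) ^ 2
      ≤ γ^2 * ((n:ℝ)^ℓ + 1) + α * (1-ε)^(2*ℓ) := by
    refine le_trans hCS ?_
    rw [parseval_coeffs]
    have hsplit := Finset.sum_filter_add_sum_filter_not univ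
      (fun s : Fin n → ZMod 2 => hwt s ≤ ℓ) (fun s => (c s)^2)
    have hc2 : ∑ s : Fin n → ZMod 2, (c s)^2
        ≤ ((n:ℝ)^ℓ + 1) * (γ * ((2:ℝ)^n)⁻¹)^2
          + (1-ε)^(2*ℓ) * (α * (((2:ℝ)^n)⁻¹ * ((2:ℝ)^n)⁻¹)) := by
      rw [← hsplit]; exact add_le_add hb1 hb2
    calc (2:ℝ)^n * ((2:ℝ)^n * ∑ s : Fin n → ZMod 2, (c s)^2)
        ≤ (2:ℝ)^n * ((2:ℝ)^n * (((n:ℝ)^ℓ + 1) * (γ * ((2:ℝ)^n)⁻¹)^2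
            + (1-ε)^(2*ℓ) * (α * (((2:ℝ)^n)⁻¹ * ((2:ℝ)^n)⁻¹)))) := by
          apply mul_le_mul_of_nonneg_left _ hN.le
          exact mul_le_mul_of_nonneg_left hc2 hN.le
      _ = γ^2 * ((n:ℝ)^ℓ + 1) + α * (1-ε)^(2*ℓ) := by
          field_simp
  have hnn : 0 ≤ ∑ x : Fin n → ZMod 2, |∑ s : Fin n → ZMod 2, c s * (-1:ℝ)^(bdot s x)| :=
    Finset.sum_nonneg fun x _ => abs_nonneg _
  calc ∑ x : Fin n → ZMod 2, |∑ s : Fin n → ZMod 2, c s * (-1:ℝ)^(bdot s x)|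
      = Real.sqrt ((∑ x : Fin n → ZMod 2, |∑ s : Fin n → ZMod 2, c s * (-1:ℝ)^(bdot s x)|)^2) :=
        (Real.sqrt_sq hnn).symm
    _ ≤ Real.sqrt (γ^2 * ((n:ℝ)^ℓ + 1) + α * (1-ε)^(2*ℓ)) := Real.sqrt_le_sqrt hgoal


end
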